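/- Let n ≥ 3, k = 2, and let B = ([0,N] × [0,m_2] × ... × [0,m_n]) ∩ ℤ^n. Set I_j = {1,j} for 2 ≤ j ≤ n. For each j, let γ_j : {0,...,H_j} → π_{I_j}(B) be a nearest-neighbor path of ω_{I_j}-open sites with first coordinate 0 at time 0, first coordinate N at time H_j, and first coordinate < N at all times t < H_j. Then there exists a nearest-neighbor path λ : {0,...,T} → B all of whose sites are ω_{I_j}-open for every 2 ≤ j ≤ n, with π_{I_j}(λ(0)) = γ_j(0) and π_{I_j}(λ(T)) = γ_j(H_j) for each j. In particular, if each projected rectangle π_{I_j}(B) has a bottom-to-top crossing of ω_{I_j}-open sites, then B has a bottom-to-top crossing (in the first coordinate) of sites that are ω_{I_j}-open for every 2 ≤ j ≤ n. -/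

import Mathlib

namespace BernoulliHyperplane

variable {n : ℕ}

/-- Nearest-neighbor adjacency in `ℤⁿ` (`l¹`-distance one). -/
def latAdj (v w : Fin n → ℤ) : Prop := (∑ i, |v i - w i|) = 1

/-- Coordinate projection onto the sublattice spanned by the coordinates in `J`. -/
def proj (J : Finset (Fin n)) (v : Fin n → ℤ) : Fin n → ℤ := fun i => if i ∈ J then v i else 0

/-- The sublattice `ℤ^J` of points supported on the coordinates in `J`. -/
def sub (J : Finset (Fin n)) : Set (Fin n → ℤ) := {v | ∀ i ∉ J, v i = 0}

/-- The open cluster of `x` inside the set of sites `S`, for the openness predicate `good`: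
all sites reachable from `x` by nearest-neighbor paths of `good` sites staying in `S`. -/
def clusterIn (S : Set (Fin n → ℤ)) (good : (Fin n → ℤ) → Prop) (x : Fin n → ℤ) :
    Set (Fin n → ℤ) :=
  {v | (x ∈ S ∧ good x) ∧ Relation.ReflTransGen (fun u w => latAdj u w ∧ w ∈ S ∧ good w) x v}

/-- A site of `ℤⁿ` is open in `(n,k)`-hyperplane percolation iff all its projections onto the
`k`-dimensional coordinate sublattices are open. -/
def hpOpen (k : ℕ) (f : Finset (Fin n) → (Fin n → ℤ) → Bool) (v : Fin n → ℤ) : Prop :=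
  ∀ J : Finset (Fin n), J.card = k → f J (proj J v) = true

/-- `T` surrounds the origin in the lattice `S`, witnessed by the decomposition
`S ∖ T = A ∪ B`: `A` is finite, connected, contains the origin, and is at `l¹`-distance
at least `2` from `B`. -/
def SurroundsWith (S T A B : Set (Fin n → ℤ)) : Prop :=
  T ⊆ S ∧ A ∪ B = S \ T ∧ Disjoint A B ∧ (0 : Fin n → ℤ) ∈ A ∧ A.Finite ∧
    (∀ a ∈ A, Relation.ReflTransGen (fun u w : Fin n → ℤ => latAdj u w ∧ u ∈ A ∧ w ∈ A) 0 a) ∧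
    ∀ a ∈ A, ∀ b ∈ B, 2 ≤ ∑ i, |a i - b i|

/-- `T` surrounds the origin in the lattice `S`. -/
def Surrounds (S T : Set (Fin n → ℤ)) : Prop := ∃ A B, SurroundsWith S T A B

/-- For `x ∈ ℤᵏ_I` and `v ∈ ℤ^{n-k}_{[n]∖I}`, the site `v` is `𝒫_I(x)`-closed: the unique
point `u = x + v` of `𝒫_I(x)` projecting to `v` satisfies `ω_J(π_J(u)) = 0` for some
`k`-subset `J ≠ I`. -/
def PClosed (k : ℕ) (f : Finset (Fin n) → (Fin n → ℤ) → Bool) (I : Finset (Fin n))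
    (x v : Fin n → ℤ) : Prop :=
  ∃ J : Finset (Fin n), J.card = k ∧ J ≠ I ∧ f J (proj J (x + v)) = false



lemma natdist_iff {u v : ℕ} : Nat.dist u v = 1 ↔ (v = u + 1 ∨ u = v + 1) := by
  simp [Nat.dist]; omega

lemma walk_nbr {a : ℕ → ℤ} {Ka : ℕ} (hstep : ∀ i < Ka, |a (i+1) - a i| = 1) (u v : ℕ)
    (hu : u ≤ Ka) (hv : v ≤ Ka) (hd : Nat.dist u v = 1) : a v = a u + 1 ∨ a v = a u - 1 := by
  rcases natdist_iff.mp hd with h | h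
  · have := hstep u (by omega)
    rcases abs_eq (by norm_num : (0:ℤ) ≤ 1) |>.mp this with h' | h' <;> rw [h] <;> omega
  · have := hstep v (by omega)
    rcases abs_eq (by norm_num : (0:ℤ) ≤ 1) |>.mp this with h' | h' <;> rw [h] at * <;> omega

def nb (a : ℕ → ℤ) (Ka x : ℕ) (d : ℤ) : Finset ℕ :=
  (Finset.range (Ka+1)).filter (fun y => Nat.dist x y = 1 ∧ a y = d)

lemma nb_card (N : ℤ) {a : ℕ → ℤ} {Ka : ℕ} (ha0 : a 0 = 0) (haK : a Ka = N)
    (hstep : ∀ i < Ka, |a (i+1) - a i| = 1) (hpos : ∀ i ≤ Ka, 0 ≤ a i)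
    (hlt : ∀ i < Ka, a i < N) (hKa : 1 ≤ Ka) {x : ℕ} (hx : x ≤ Ka) :
    (x = 0 ∧ a x = 0 ∧ (nb a Ka x (a x + 1)).card = 1 ∧ (nb a Ka x (a x - 1)).card = 0)
    ∨ (x = Ka ∧ a x = N ∧ (nb a Ka x (a x + 1)).card = 0 ∧ (nb a Ka x (a x - 1)).card = 1)
    ∨ (0 < x ∧ x < Ka ∧ a x = 0 ∧ (nb a Ka x (a x + 1)).card = 2 ∧ (nb a Ka x (a x - 1)).card = 0)
    ∨ (0 < x ∧ x < Ka ∧ 0 < a x ∧ a x < N ∧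
        (nb a Ka x (a x + 1)).card + (nb a Ka x (a x - 1)).card = 2) := by
  have hdn0 : ∀ z ≤ Ka, a z = 0 → nb a Ka z (a z - 1) = ∅ := by
    intro z hz h0
    apply Finset.filter_eq_empty_iff.mpr
    intro y hy
    rw [Finset.mem_range] at hy
    rintro ⟨-, hay⟩
    have := hpos y (by omega)
    omega
  by_cases hx0 : x = 0
  · subst hx0
    left
    have ha1 : a 1 = 1 := by
      rcases walk_nbr hstep 0 1 (Nat.zero_le _) hKa (by simp [Nat.dist]) with h | h
      · omega
      · have := hpos 1 hKa; omega
    refine ⟨rfl, ha0, ?_, ?_⟩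
    · have : nb a Ka 0 (a 0 + 1) = {1} := by
        ext y
        simp only [nb, Finset.mem_filter, Finset.mem_range, Finset.mem_singleton, natdist_iff]
        constructor
        · rintro ⟨h1, h2, h3⟩; omega
        · rintro rfl; exact ⟨by omega, by omega, by omega⟩
      rw [this]; rfl
    · rw [hdn0 0 (Nat.zero_le _) ha0]; rfl
  · by_cases hxK : x = Ka
    · right; left
      have haKx : a x = N := by rw [hxK]; exact haK
      have haK1 : a (Ka - 1) = N - 1 := by
        rcases walk_nbr hstep Ka (Ka - 1) le_rfl (by omega) (by rw [natdist_iff]; omega) with h | h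
        · have := hlt (Ka - 1) (by omega); rw [haK] at h; omega
        · rw [haK] at h; omega
      refine ⟨hxK, haKx, ?_, ?_⟩
      · apply Finset.card_eq_zero.mpr
        apply Finset.filter_eq_empty_iff.mpr
        intro y hy
        rw [Finset.mem_range] at hy
        rintro ⟨hd, hay⟩
        rcases natdist_iff.mp hd with h | h
        · omega
        · have hy1 : y = Ka - 1 := by omega
          rw [hy1, haK1] at hay
          rw [haKx] at hay
          omega
      · have heq : nb a Ka x (a x - 1) = {Ka - 1} := by
          ext y
          simp only [nb, Finset.mem_filter, Finset.mem_range, Finset.mem_singleton, natdist_iff]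
          constructor
          · rintro ⟨h1, h2, h3⟩; omega
          · rintro rfl
            refine ⟨by omega, by omega, by rw [haK1, haKx]⟩
        rw [heq]; rfl
    · -- interior
      have hxint : 0 < x ∧ x < Ka := by omega
      have hsplit : (nb a Ka x (a x + 1)).card + (nb a Ka x (a x - 1)).card = 2 := by
        have hdisj : Disjoint (nb a Ka x (a x + 1)) (nb a Ka x (a x - 1)) := by
          rw [Finset.disjoint_left]
          intro y h1 h2
          simp only [nb, Finset.mem_filter] at h1 h2
          omega
        have hunion : nb a Ka x (a x + 1) ∪ nb a Ka x (a x - 1) = {x - 1, x + 1} := by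
          ext y
          simp only [nb, Finset.mem_union, Finset.mem_filter, Finset.mem_range,
            Finset.mem_insert, Finset.mem_singleton, natdist_iff]
          constructor
          · rintro (⟨h1, h2, h3⟩ | ⟨h1, h2, h3⟩) <;> omega
          · rintro (rfl | rfl)
            · rcases walk_nbr hstep x (x-1) hx (by omega) (by rw [natdist_iff]; omega) with h | h
              · left; exact ⟨by omega, by omega, h⟩
              · right; exact ⟨by omega, by omega, h⟩
            · rcases walk_nbr hstep x (x+1) hx (by omega) (by rw [natdist_iff]; omega) with h | h
              · left; exact ⟨by omega, by omega, h⟩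
              · right; exact ⟨by omega, by omega, h⟩
        have := Finset.card_union_of_disjoint hdisj
        rw [hunion] at this
        rw [← this]
        have : ({x - 1, x + 1} : Finset ℕ).card = 2 := by
          rw [Finset.card_insert_of_notMem (by simp)]; rfl
        omega
      rcases eq_or_lt_of_le (hpos x hx) with h0 | h0
      · right; right; left
        have hd0 := hdn0 x hx h0.symm
        rw [hd0] at hsplit ⊢
        simp at hsplit ⊢
        exact ⟨hxint.1, hxint.2, h0.symm, hsplit⟩
      · right; right; right
        exact ⟨hxint.1, hxint.2, h0, hlt x hxint.2, hsplit⟩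



def VV (a b : ℕ → ℤ) (Ka Kb : ℕ) : Finset (ℕ × ℕ) :=
  (Finset.range (Ka+1) ×ˢ Finset.range (Kb+1)).filter (fun p => a p.1 = b p.2)

def adjP (a b : ℕ → ℤ) (Ka Kb : ℕ) (p q : ℕ × ℕ) : Prop :=
  p ∈ VV a b Ka Kb ∧ q ∈ VV a b Ka Kb ∧ Nat.dist p.1 q.1 = 1 ∧ Nat.dist p.2 q.2 = 1

instance adjP_dec {a b : ℕ → ℤ} {Ka Kb : ℕ} {p : ℕ × ℕ} : DecidablePred (adjP a b Ka Kb p) :=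
  fun q => by unfold adjP; infer_instance

lemma adjP_symm {a b Ka Kb} {p q} (h : adjP a b Ka Kb p q) : adjP a b Ka Kb q p := by
  obtain ⟨h1, h2, h3, h4⟩ := h
  exact ⟨h2, h1, by rwa [Nat.dist_comm], by rwa [Nat.dist_comm]⟩

lemma mem_VV {a b : ℕ → ℤ} {Ka Kb : ℕ} {p : ℕ × ℕ} :
    p ∈ VV a b Ka Kb ↔ p.1 ≤ Ka ∧ p.2 ≤ Kb ∧ a p.1 = b p.2 := by
  simp only [VV, Finset.mem_filter, Finset.mem_product, Finset.mem_range]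
  constructor
  · rintro ⟨⟨h1, h2⟩, h3⟩; exact ⟨by omega, by omega, h3⟩
  · rintro ⟨h1, h2, h3⟩; exact ⟨⟨by omega, by omega⟩, h3⟩



section Pair
variable {N : ℤ} {a b : ℕ → ℤ} {Ka Kb : ℕ}

lemma deg_eq (hastep : ∀ i < Ka, |a (i+1) - a i| = 1)
    (hbstep : ∀ i < Kb, |b (i+1) - b i| = 1)
    {p : ℕ × ℕ} (hp : p ∈ VV a b Ka Kb) :
    ((VV a b Ka Kb).filter (adjP a b Ka Kb p)).card =
      (nb a Ka p.1 (a p.1 + 1)).card * (nb b Kb p.2 (b p.2 + 1)).card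
      + (nb a Ka p.1 (a p.1 - 1)).card * (nb b Kb p.2 (b p.2 - 1)).card := by
  classical
  obtain ⟨hx, hy, hV⟩ := mem_VV.mp hp
  have key : (VV a b Ka Kb).filter (adjP a b Ka Kb p) =
      ((nb a Ka p.1 (a p.1 + 1)) ×ˢ (nb b Kb p.2 (b p.2 + 1))) ∪
      ((nb a Ka p.1 (a p.1 - 1)) ×ˢ (nb b Kb p.2 (b p.2 - 1))) := by
    ext q
    simp only [Finset.mem_filter, Finset.mem_union, Finset.mem_product, nb,
      Finset.mem_range, adjP, mem_VV]
    constructor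
    · rintro ⟨⟨hq1, hq2, hVq⟩, -, -, hd1, hd2⟩
      rcases walk_nbr hastep p.1 q.1 hx hq1 hd1 with h | h
      · left
        exact ⟨⟨by omega, hd1, h⟩, ⟨by omega, hd2, by rw [← hVq, h, hV]⟩⟩
      · right
        exact ⟨⟨by omega, hd1, h⟩, ⟨by omega, hd2, by rw [← hVq, h, hV]⟩⟩
    · rintro (⟨⟨hq1, hd1, hv1⟩, ⟨hq2, hd2, hv2⟩⟩ | ⟨⟨hq1, hd1, hv1⟩, ⟨hq2, hd2, hv2⟩⟩) <;>
        exact ⟨⟨by omega, by omega, by rw [hv1, hv2, hV]⟩,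
          ⟨hx, hy, hV⟩, ⟨by omega, by omega, by rw [hv1, hv2, hV]⟩, hd1, hd2⟩
  rw [key, Finset.card_union_of_disjoint, Finset.card_product, Finset.card_product]
  rw [Finset.disjoint_left]
  rintro ⟨q1, q2⟩ hq1 hq2
  simp only [Finset.mem_product, nb, Finset.mem_filter] at hq1 hq2
  omega

lemma deg_odd (hN : 0 < N) (hKa : 1 ≤ Ka) (hKb : 1 ≤ Kb)
    (ha0 : a 0 = 0) (haK : a Ka = N) (hastep : ∀ i < Ka, |a (i+1) - a i| = 1)
    (hapos : ∀ i ≤ Ka, 0 ≤ a i) (halt : ∀ i < Ka, a i < N)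
    (hb0 : b 0 = 0) (hbK : b Kb = N) (hbstep : ∀ i < Kb, |b (i+1) - b i| = 1)
    (hbpos : ∀ i ≤ Kb, 0 ≤ b i) (hblt : ∀ i < Kb, b i < N)
    {p : ℕ × ℕ} (hp : p ∈ VV a b Ka Kb) :
    Odd ((VV a b Ka Kb).filter (adjP a b Ka Kb p)).card ↔
      (p = (0,0) ∨ p = (Ka, Kb)) := by
  classical
  obtain ⟨hx, hy, hV⟩ := mem_VV.mp hp
  rw [deg_eq hastep hbstep hp]
  rcases nb_card N ha0 haK hastep hapos halt hKa hx with
      ⟨hp1, hh1, hc1, hc2⟩ | ⟨hp1, hh1, hc1, hc2⟩ | ⟨hp1, hp1', hh1, hc1, hc2⟩ |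
      ⟨hp1, hp1', hh1, hh1', hc12⟩ <;>
    rcases nb_card N hb0 hbK hbstep hbpos hblt hKb hy with
        ⟨hp2, hh2, hc3, hc4⟩ | ⟨hp2, hh2, hc3, hc4⟩ | ⟨hp2, hp2', hh2, hc3, hc4⟩ |
        ⟨hp2, hp2', hh2, hh2', hc34⟩
  all_goals simp only [Prod.ext_iff, Nat.odd_iff]
  all_goals try (rw [hc1, hc2])
  all_goals try (rw [hc3, hc4])
  all_goals try omega
  all_goals {
    rcases (by omega : (nb a Ka p.1 (a p.1 + 1)).card = 0 ∧ (nb a Ka p.1 (a p.1 - 1)).card = 2 ∨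
        (nb a Ka p.1 (a p.1 + 1)).card = 1 ∧ (nb a Ka p.1 (a p.1 - 1)).card = 1 ∨
        (nb a Ka p.1 (a p.1 + 1)).card = 2 ∧ (nb a Ka p.1 (a p.1 - 1)).card = 0) with
      ⟨h1, h2⟩ | ⟨h1, h2⟩ | ⟨h1, h2⟩ <;>
    rcases (by omega : (nb b Kb p.2 (b p.2 + 1)).card = 0 ∧ (nb b Kb p.2 (b p.2 - 1)).card = 2 ∨
        (nb b Kb p.2 (b p.2 + 1)).card = 1 ∧ (nb b Kb p.2 (b p.2 - 1)).card = 1 ∨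
        (nb b Kb p.2 (b p.2 + 1)).card = 2 ∧ (nb b Kb p.2 (b p.2 - 1)).card = 0) with
      ⟨h3, h4⟩ | ⟨h3, h4⟩ | ⟨h3, h4⟩ <;>
    rw [h1, h2, h3, h4] <;> omega
  }

end Pair


section Pair2
variable {N : ℤ} {a b : ℕ → ℤ} {Ka Kb : ℕ}

lemma cast_zmod2 (m : ℕ) : (m : ZMod 2) = if Odd m then 1 else 0 := by
  rcases Nat.even_or_odd m with ⟨k, rfl⟩ | ⟨k, rfl⟩
  · have hne : ¬ Odd (k + k) := by simp [Nat.odd_iff]; omega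
    simp only [hne, if_false]
    push_cast
    exact CharTwo.add_self_eq_zero _
  · have hodd : Odd (2*k + 1) := ⟨k, rfl⟩
    simp only [hodd, if_true]
    push_cast
    rw [show ((2:ZMod 2) * k + 1) = 2 * k + 1 by ring]
    simp [show (2 : ZMod 2) = 0 from rfl]

lemma reach_target (hN : 0 < N) (hKa : 1 ≤ Ka) (hKb : 1 ≤ Kb)
    (ha0 : a 0 = 0) (haK : a Ka = N) (hastep : ∀ i < Ka, |a (i+1) - a i| = 1)
    (hapos : ∀ i ≤ Ka, 0 ≤ a i) (halt : ∀ i < Ka, a i < N)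
    (hb0 : b 0 = 0) (hbK : b Kb = N) (hbstep : ∀ i < Kb, |b (i+1) - b i| = 1)
    (hbpos : ∀ i ≤ Kb, 0 ≤ b i) (hblt : ∀ i < Kb, b i < N) :
    Relation.ReflTransGen (adjP a b Ka Kb) (0,0) (Ka,Kb) := by
  classical
  by_contra hnr
  set Reach : ℕ × ℕ → Prop := fun p => Relation.ReflTransGen (adjP a b Ka Kb) (0,0) p with hReach
  set C : Finset (ℕ × ℕ) := (VV a b Ka Kb).filter Reach with hC
  have h00V : ((0,0) : ℕ × ℕ) ∈ VV a b Ka Kb := mem_VV.mpr ⟨by omega, by omega, by rw [ha0, hb0]⟩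
  have h00C : ((0,0) : ℕ × ℕ) ∈ C := Finset.mem_filter.mpr ⟨h00V, Relation.ReflTransGen.refl⟩
  have hclos : ∀ p ∈ C, ∀ q, adjP a b Ka Kb p q → q ∈ C := by
    intro p hp q hq
    have hpR : Reach p := (Finset.mem_filter.mp hp).2
    exact Finset.mem_filter.mpr ⟨hq.2.1, hpR.tail hq⟩
  have hCV : C ⊆ VV a b Ka Kb := Finset.filter_subset _ _
  have hdeg_eq : ∀ p ∈ C, (VV a b Ka Kb).filter (adjP a b Ka Kb p) =
      C.filter (adjP a b Ka Kb p) := by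
    intro p hp
    ext q
    simp only [Finset.mem_filter]
    constructor
    · rintro ⟨hq, hadj⟩
      exact ⟨(hclos p hp q hadj), hadj⟩
    · rintro ⟨hq, hadj⟩
      exact ⟨hCV hq, hadj⟩
  -- the sum of degrees over C, in ZMod 2, is 0
  have hsum0 : (∑ p ∈ C, (((VV a b Ka Kb).filter (adjP a b Ka Kb p)).card : ZMod 2)) = 0 := by
    have e1 : ∀ p ∈ C, (((VV a b Ka Kb).filter (adjP a b Ka Kb p)).card : ZMod 2)
        = ∑ q ∈ C, (if adjP a b Ka Kb p q then (1 : ZMod 2) else 0) := by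
      intro p hp
      rw [hdeg_eq p hp, Finset.card_filter]
      push_cast
      exact Finset.sum_congr rfl (fun q _ => by split <;> simp
        )
    rw [Finset.sum_congr rfl e1, ← Finset.sum_product']
    apply Finset.sum_involution (fun z _ => Prod.swap z)
    · intro z hz
      have : adjP a b Ka Kb z.1 z.2 ↔ adjP a b Ka Kb z.2 z.1 := ⟨adjP_symm, adjP_symm⟩
      by_cases h : adjP a b Ka Kb z.1 z.2
      · simp only [Prod.swap, h, this.mp h, if_true]
        exact CharTwo.add_self_eq_zero _
      · simp only [Prod.swap, h, fun hh => h (this.mpr hh), if_neg]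
        · simp
          intro hh
          exact h (adjP_symm hh)
    · intro z hz hne
      intro hswap
      apply hne
      have hzz : z.2 = z.1 := congrArg Prod.fst hswap
      have : ¬ adjP a b Ka Kb z.1 z.2 := by
        rintro ⟨-, -, hd, -⟩
        rw [hzz] at hd
        simp [Nat.dist_self] at hd
      simp [this]
    · intro z hz
      rcases Finset.mem_product.mp hz with ⟨h1, h2⟩
      exact Finset.mem_product.mpr ⟨h2, h1⟩
    · intro z hz
      rfl
  -- the same sum is 1
  have hsum1 : (∑ p ∈ C, (((VV a b Ka Kb).filter (adjP a b Ka Kb p)).card : ZMod 2)) = 1 := by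
    have e2 : ∀ p ∈ C, (((VV a b Ka Kb).filter (adjP a b Ka Kb p)).card : ZMod 2)
        = if Odd ((VV a b Ka Kb).filter (adjP a b Ka Kb p)).card then 1 else 0 :=
      fun p _ => cast_zmod2 _
    rw [Finset.sum_congr rfl e2, Finset.sum_boole]
    have : C.filter (fun p => Odd ((VV a b Ka Kb).filter (adjP a b Ka Kb p)).card) = {(0,0)} := by
      ext p
      simp only [Finset.mem_filter, Finset.mem_singleton]
      constructor
      · rintro ⟨hpC, hodd⟩
        rcases (deg_odd hN hKa hKb ha0 haK hastep hapos halt hb0 hbK hbstep hbpos hblt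
            (hCV hpC)).mp hodd with h | h
        · exact h
        · exfalso
          exact hnr (by rw [← h]; exact (Finset.mem_filter.mp hpC).2)
      · rintro rfl
        refine ⟨h00C, ?_⟩
        rw [deg_odd hN hKa hKb ha0 haK hastep hapos halt hb0 hbK hbstep hbpos hblt h00V]
        left; rfl
    rw [this]
    simp
  rw [hsum0] at hsum1
  exact absurd hsum1.symm one_ne_zero

end Pair2


lemma rtg_to_seq' {α : Type*} {R : α → α → Prop} {x y : α} (h : Relation.ReflTransGen R x y) :
    ∃ (T : ℕ) (f : ℕ → α), f 0 = x ∧ f T = y ∧ ∀ t < T, R (f t) (f (t+1)) := by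
  induction h with
  | refl => exact ⟨0, fun _ => x, rfl, rfl, by omega⟩
  | @tail b c hxb hbc ih =>
    obtain ⟨T, f, h0, hT, hs⟩ := ih
    refine ⟨T+1, fun t => if t ≤ T then f t else c, by simp [h0], by simp, ?_⟩
    intro t ht
    rcases Nat.lt_or_ge t T with h | h
    · simpa [Nat.le_of_lt h, Nat.succ_le_of_lt h] using hs t h
    · have : t = T := by omega
      subst this
      simpa [hT] using hbc

lemma pairSync {N : ℤ} {a b : ℕ → ℤ} {Ka Kb : ℕ}
    (ha0 : a 0 = 0) (haK : a Ka = N) (hastep : ∀ i < Ka, |a (i+1) - a i| = 1)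
    (hapos : ∀ i ≤ Ka, 0 ≤ a i) (halt : ∀ i < Ka, a i < N)
    (hb0 : b 0 = 0) (hbK : b Kb = N) (hbstep : ∀ i < Kb, |b (i+1) - b i| = 1)
    (hbpos : ∀ i ≤ Kb, 0 ≤ b i) (hblt : ∀ i < Kb, b i < N) :
    ∃ (L : ℕ) (c : ℕ → ℕ × ℕ), c 0 = (0,0) ∧ c L = (Ka,Kb) ∧
      (∀ s < L, c s ≠ (Ka,Kb)) ∧
      (∀ s ≤ L, (c s).1 ≤ Ka ∧ (c s).2 ≤ Kb ∧ a ((c s).1) = b ((c s).2)) ∧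
      (∀ s < L, Nat.dist (c s).1 (c (s+1)).1 = 1 ∧ Nat.dist (c s).2 (c (s+1)).2 = 1) := by
  classical
  -- degenerate cases
  by_cases hKa : Ka = 0
  · have hN0 : N = 0 := by rw [← haK, hKa, ha0]
    have hKb : Kb = 0 := by
      by_contra hKb
      have := hblt 0 (by omega)
      rw [hb0, hN0] at this
      omega
    subst hKa; subst hKb
    exact ⟨0, fun _ => (0,0), rfl, rfl, by omega, fun s _ => ⟨by simp, by simp, by simp [ha0, hb0]⟩,
      by omega⟩
  by_cases hKb : Kb = 0
  · have hN0 : N = 0 := by rw [← hbK, hKb, hb0]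
    exfalso
    have := halt 0 (by omega)
    rw [ha0, hN0] at this
    omega
  have hKa1 : 1 ≤ Ka := by omega
  have hKb1 : 1 ≤ Kb := by omega
  have hN : 0 < N := by
    have := halt 0 (by omega)
    rw [ha0] at this
    omega
  obtain ⟨L0, c, hc0, hcL, hstep⟩ := rtg_to_seq'
    (reach_target hN hKa1 hKb1 ha0 haK hastep hapos halt hb0 hbK hbstep hbpos hblt)
  -- truncate at the first visit of the target
  have hex : ∃ s, c s = (Ka, Kb) := ⟨L0, hcL⟩
  set L := sInf {s | c s = (Ka, Kb)} with hL
  have hcLt : c L = (Ka, Kb) := Nat.sInf_mem hex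
  have hLle : L ≤ L0 := Nat.sInf_le hcL
  have hne : ∀ s < L, c s ≠ (Ka, Kb) := fun s hs => Nat.notMem_of_lt_sInf hs
  have hmem : ∀ s ≤ L, c s ∈ VV a b Ka Kb := by
    intro s hs
    rcases Nat.eq_or_lt_of_le hs with rfl | hlt
    · rw [hcLt]
      exact mem_VV.mpr ⟨le_rfl, le_rfl, by rw [haK, hbK]⟩
    · exact (hstep s (by omega)).1
  refine ⟨L, c, hc0, hcLt, hne, ?_, ?_⟩
  · intro s hs
    exact mem_VV.mp (hmem s hs)
  · intro s hs
    exact ⟨(hstep s (by omega)).2.2.1, (hstep s (by omega)).2.2.2⟩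



/-- number of vertical steps of `g` before time `t` -/
def cnt (g : ℕ → ℤ) (t : ℕ) : ℕ := ((Finset.range t).filter (fun u => g (u+1) ≠ g u)).card

/-- first time with `i` vertical steps completed (and `≤ E`) -/
noncomputable def pf (g : ℕ → ℤ) (E i : ℕ) : ℕ := sInf {t | cnt g t = i ∧ t ≤ E}

lemma cnt_zero (g : ℕ → ℤ) : cnt g 0 = 0 := by simp [cnt]

lemma cnt_mono (g : ℕ → ℤ) {u v : ℕ} (h : u ≤ v) : cnt g u ≤ cnt g v :=
  Finset.card_le_card (Finset.filter_subset_filter _ (Finset.range_subset_range.mpr h))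

lemma cnt_succ (g : ℕ → ℤ) (t : ℕ) :
    cnt g (t+1) = cnt g t + (if g (t+1) ≠ g t then 1 else 0) := by
  classical
  rw [cnt, Finset.range_add_one, Finset.filter_insert]
  split
  · rw [Finset.card_insert_of_notMem (by simp)]
    rfl
  · simp [cnt]

lemma cnt_exists (g : ℕ → ℤ) (E : ℕ) : ∀ i ≤ cnt g E, ∃ t, cnt g t = i ∧ t ≤ E := by
  induction E with
  | zero =>
    intro i hi
    rw [cnt_zero] at hi
    exact ⟨0, by rw [cnt_zero]; omega, le_rfl⟩
  | succ E ih =>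
    intro i hi
    rcases Nat.lt_or_ge (cnt g E) i with h | h
    · have := cnt_succ g E
      have hieq : i = cnt g (E+1) := by split at this <;> omega
      exact ⟨E+1, hieq.symm, le_rfl⟩
    · obtain ⟨t, ht, htE⟩ := ih i h
      exact ⟨t, ht, by omega⟩

lemma pf_spec (g : ℕ → ℤ) {E i : ℕ} (h : i ≤ cnt g E) :
    cnt g (pf g E i) = i ∧ pf g E i ≤ E :=
  Nat.sInf_mem (cnt_exists g E i h)

lemma pf_min (g : ℕ → ℤ) {E i t : ℕ} (ht : cnt g t = i) (hE : t ≤ E) : pf g E i ≤ t :=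
  Nat.sInf_le ⟨ht, hE⟩

lemma pf_zero (g : ℕ → ℤ) (E : ℕ) : pf g E 0 = 0 :=
  Nat.le_antisymm (pf_min g (cnt_zero g) (Nat.zero_le _)) (Nat.zero_le _)

lemma run_horiz (g : ℕ → ℤ) {u v : ℕ} (huv : u ≤ v) (hc : cnt g u = cnt g v) :
    ∀ t, u ≤ t → t < v → g (t+1) = g t := by
  intro t h1 h2
  have e1 : cnt g u ≤ cnt g t := cnt_mono g h1
  have e2 : cnt g (t+1) ≤ cnt g v := cnt_mono g (by omega)
  have e3 := cnt_succ g t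
  by_contra hne
  rw [if_pos hne] at e3
  omega

lemma run_const_aux (g : ℕ → ℤ) : ∀ k u, cnt g u = cnt g (u+k) → g (u+k) = g u := by
  intro k
  induction k with
  | zero => intro u _; rfl
  | succ k ih =>
    intro u hc
    have e1 := cnt_mono g (show u ≤ u+k by omega)
    have e2 := cnt_mono g (show u+k ≤ u+(k+1) by omega)
    rw [show u+(k+1) = (u+k)+1 by omega,
      run_horiz g (show u ≤ u+(k+1) by omega) hc (u+k) (by omega) (by omega)]
    exact ih u (by omega)

lemma run_const (g : ℕ → ℤ) {u v : ℕ} (huv : u ≤ v) (hc : cnt g u = cnt g v) :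
    g v = g u := by
  obtain ⟨k, rfl⟩ := Nat.exists_eq_add_of_le huv
  exact run_const_aux g k u hc

lemma pf_succ (g : ℕ → ℤ) {E i : ℕ} (h : i + 1 ≤ cnt g E) :
    1 ≤ pf g E (i+1) ∧ cnt g (pf g E (i+1) - 1) = i ∧
      g (pf g E (i+1)) ≠ g (pf g E (i+1) - 1) ∧ pf g E i ≤ pf g E (i+1) - 1 := by
  obtain ⟨hcq, hqE⟩ := pf_spec g h
  set q := pf g E (i+1) with hq
  have hq0 : q ≠ 0 := by
    intro h0
    rw [h0, cnt_zero] at hcq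
    omega
  have hq1 : 1 ≤ q := by omega
  have hmin : cnt g (q - 1) ≠ i + 1 := by
    intro hc
    have := pf_min g (E := E) hc (by omega)
    omega
  have hsq := cnt_succ g (q - 1)
  rw [show q - 1 + 1 = q by omega] at hsq
  have hcnt1 : cnt g (q-1) = i := by split at hsq <;> omega
  have hvert : g q ≠ g (q - 1) := by
    intro hc
    have hnn : ¬ (g q ≠ g (q - 1)) := fun hh => hh hc
    rw [if_neg hnn] at hsq
    omega
  exact ⟨hq1, hcnt1, hvert, pf_min g (E := E) hcnt1 (by omega)⟩



lemma multiSync {ι : Type*} (N : ℤ) (K : ι → ℕ) (A : ι → ℕ → ℤ) :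
    ∀ (l : List ι), l ≠ [] →
    (∀ j ∈ l, A j 0 = 0) → (∀ j ∈ l, A j (K j) = N) →
    (∀ j ∈ l, ∀ i < K j, |A j (i+1) - A j i| = 1) →
    (∀ j ∈ l, ∀ i ≤ K j, 0 ≤ A j i) →
    (∀ j ∈ l, ∀ i < K j, A j i < N) →
    ∃ (S : ℕ) (σ : ι → ℕ → ℕ) (h : ℕ → ℤ),
      h 0 = 0 ∧ h S = N ∧ (∀ s < S, |h (s+1) - h s| = 1) ∧ (∀ s ≤ S, 0 ≤ h s) ∧
      (∀ s < S, h s < N) ∧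
      ∀ j ∈ l, σ j 0 = 0 ∧ σ j S = K j ∧ (∀ s ≤ S, σ j s ≤ K j ∧ A j (σ j s) = h s) ∧
        (∀ s < S, Nat.dist (σ j s) (σ j (s+1)) = 1) := by
  classical
  intro l
  induction l with
  | nil => intro h; exact absurd rfl h
  | cons j l ih =>
    intro _ h0 hK hstep hpos hlt
    rcases eq_or_ne l [] with rfl | hlne
    · -- base case: a single walker
      refine ⟨K j, fun _ s => s, A j, h0 j (by simp), hK j (by simp), ?_, ?_, ?_, ?_⟩
      · exact fun s hs => hstep j (by simp) s hs
      · exact fun s hs => hpos j (by simp) s hs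
      · exact fun s hs => hlt j (by simp) s hs
      · intro j' hj'
        have hj : j' = j := by simpa using hj'
        subst hj
        refine ⟨rfl, rfl, fun s hs => ⟨hs, rfl⟩, fun s hs => by simp [Nat.dist]⟩
    · obtain ⟨S, σ, h, hh0, hhS, hhstep, hhpos, hhlt, hσ⟩ :=
        ih hlne (fun i hi => h0 i (by simp [hi])) (fun i hi => hK i (by simp [hi]))
          (fun i hi => hstep i (by simp [hi])) (fun i hi => hpos i (by simp [hi]))
          (fun i hi => hlt i (by simp [hi]))
      obtain ⟨L, c, hc0, hcL, hcne, hcmem, hcstep⟩ :=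
        pairSync hh0 hhS hhstep hhpos hhlt (h0 j (by simp)) (hK j (by simp))
          (hstep j (by simp)) (hpos j (by simp)) (hlt j (by simp))
      refine ⟨L, fun i s => if i = j then (c s).2 else σ i ((c s).1), fun s => h ((c s).1),
        ?_, ?_, ?_, ?_, ?_, ?_⟩
      · show h ((c 0).1) = 0
        rw [hc0]; exact hh0
      · show h ((c L).1) = N
        rw [hcL]; exact hhS
      · intro s hs
        show |h ((c (s+1)).1) - h ((c s).1)| = 1
        rcases natdist_iff.mp (hcstep s hs).1 with he | he
        · rw [he]
          exact hhstep _ (by have := (hcmem (s+1) (by omega)).1; omega)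
        · rw [he, abs_sub_comm]
          exact hhstep _ (by have := (hcmem s (by omega)).1; omega)
      · intro s hs
        exact hhpos _ (hcmem s hs).1
      · -- h ((c s).1) < N for s < L
        intro s hs
        have hm := hcmem s (by omega)
        show h ((c s).1) < N
        rcases Nat.lt_or_ge ((c s).1) S with hS1 | hS1
        · exact hhlt _ hS1
        · exfalso
          have he1 : (c s).1 = S := by omega
          have heq : h ((c s).1) = A j ((c s).2) := hm.2.2
          have h2K : (c s).2 = K j := by
            by_contra hne
            have := hlt j (by simp) ((c s).2) (by omega)
            rw [← heq, he1, hhS] at this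
            omega
          exact hcne s hs (by rw [← he1, ← h2K])
      · intro j' hj'
        by_cases hjj : j' = j
        · subst hjj
          refine ⟨?_, ?_, ?_, ?_⟩
          · show (if j' = j' then (c 0).2 else σ j' ((c 0).1)) = 0
            rw [if_pos rfl, hc0]
          · show (if j' = j' then (c L).2 else σ j' ((c L).1)) = K j'
            rw [if_pos rfl, hcL]
          · intro s hs
            refine ⟨?_, ?_⟩
            · show (if j' = j' then (c s).2 else σ j' ((c s).1)) ≤ K j'
              rw [if_pos rfl]
              exact (hcmem s hs).2.1
            · show A j' (if j' = j' then (c s).2 else σ j' ((c s).1)) = h ((c s).1)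
              rw [if_pos rfl]
              exact (hcmem s hs).2.2.symm
          · intro s hs
            show Nat.dist (if j' = j' then (c s).2 else σ j' ((c s).1))
              (if j' = j' then (c (s+1)).2 else σ j' ((c (s+1)).1)) = 1
            rw [if_pos rfl, if_pos rfl]
            exact (hcstep s hs).2
        · have hj'l : j' ∈ l := by
            rcases List.mem_cons.mp hj' with h | h
            · exact absurd h hjj
            · exact h
          obtain ⟨hs0, hsS, hsb, hss⟩ := hσ j' hj'l
          refine ⟨?_, ?_, ?_, ?_⟩
          · show (if j' = j then (c 0).2 else σ j' ((c 0).1)) = 0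
            rw [if_neg hjj, hc0]
            exact hs0
          · show (if j' = j then (c L).2 else σ j' ((c L).1)) = K j'
            rw [if_neg hjj, hcL]
            exact hsS
          · intro s hs
            refine ⟨?_, ?_⟩
            · show (if j' = j then (c s).2 else σ j' ((c s).1)) ≤ K j'
              rw [if_neg hjj]
              exact (hsb _ (hcmem s hs).1).1
            · show A j' (if j' = j then (c s).2 else σ j' ((c s).1)) = h ((c s).1)
              rw [if_neg hjj]
              exact (hsb _ (hcmem s hs).1).2
          · intro s hs
            show Nat.dist (if j' = j then (c s).2 else σ j' ((c s).1))
              (if j' = j then (c (s+1)).2 else σ j' ((c (s+1)).1)) = 1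
            rw [if_neg hjj, if_neg hjj]
            rcases natdist_iff.mp (hcstep s hs).1 with he | he
            · rw [he]
              exact hss _ (by have := (hcmem (s+1) (by omega)).1; omega)
            · rw [he, Nat.dist_comm]
              exact hss _ (by have := (hcmem s (by omega)).1; omega)



variable {n : ℕ}


def Valid (e0 : Fin n) (γ : Fin n → ℕ → Fin n → ℤ) (H : Fin n → ℕ) (v : ℤ)
    (τ : Fin n → ℕ) : Prop :=
  ∀ j, j ≠ e0 → τ j ≤ H j ∧ γ j (τ j) e0 = v

def Mo (e0 : Fin n) (γ : Fin n → ℕ → Fin n → ℤ) (τ τ' : Fin n → ℕ) : Prop :=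
  (∃ j, j ≠ e0 ∧ (∀ i, i ≠ e0 → i ≠ j → τ' i = τ i) ∧ τ' e0 = τ e0 ∧
    Nat.dist (τ j) (τ' j) = 1 ∧ γ j (τ' j) e0 = γ j (τ j) e0)
  ∨ ((∀ j, j ≠ e0 → Nat.dist (τ j) (τ' j) = 1) ∧
      (∃ j, j ≠ e0 ∧ γ j (τ' j) e0 ≠ γ j (τ j) e0))

def StepR (e0 : Fin n) (γ : Fin n → ℕ → Fin n → ℤ) (H : Fin n → ℕ) (τ τ' : Fin n → ℕ) : Prop :=
  Mo e0 γ τ τ' ∧ (∃ v, Valid e0 γ H v τ) ∧ (∃ v, Valid e0 γ H v τ')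

lemma stepR_symm {e0 : Fin n} {γ H} : Symmetric (StepR e0 γ H) := by
  rintro τ τ' ⟨hmo, hv1, hv2⟩
  refine ⟨?_, hv2, hv1⟩
  rcases hmo with ⟨j, hj, hoth, he0, hd, hh⟩ | ⟨hall, j, hj, hch⟩
  · exact Or.inl ⟨j, hj, fun i h1 h2 => (hoth i h1 h2).symm, he0.symm,
      by rwa [Nat.dist_comm], hh.symm⟩
  · exact Or.inr ⟨fun i hi => by rw [Nat.dist_comm]; exact hall i hi,
      j, hj, fun hc => hch hc.symm⟩

def HorizRun (e0 : Fin n) (γ : Fin n → ℕ → Fin n → ℤ) (H : Fin n → ℕ) (j : Fin n)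
    (u v : ℕ) : Prop :=
  u ≤ H j ∧ v ≤ H j ∧ ∀ t, min u v ≤ t → t < max u v → γ j (t+1) e0 = γ j t e0

lemma eq_of_steps {f : ℕ → ℤ} {u v : ℕ} (huv : u ≤ v)
    (h : ∀ t, u ≤ t → t < v → f (t+1) = f t) : f v = f u := by
  obtain ⟨k, rfl⟩ := Nat.exists_eq_add_of_le huv
  induction k with
  | zero => rfl
  | succ k ih =>
    rw [show u + (k+1) = (u+k)+1 by omega, h (u+k) (by omega) (by omega)]
    exact ih (by omega) (fun t h1 h2 => h t h1 (by omega))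

lemma horizRun_refl {e0 : Fin n} {γ H j u} (hu : u ≤ H j) : HorizRun e0 γ H j u u :=
  ⟨hu, hu, fun t h1 h2 => by omega⟩

lemma horizRun_heights {e0 : Fin n} {γ : Fin n → ℕ → Fin n → ℤ} {H j u v}
    (h : HorizRun e0 γ H j u v) : γ j v e0 = γ j u e0 := by
  rcases le_total u v with huv | huv
  · exact eq_of_steps (f := fun t => γ j t e0) huv (fun t h1 h2 => h.2.2 t (by omega) (by omega))
  · exact (eq_of_steps (f := fun t => γ j t e0) huv
      (fun t h1 h2 => h.2.2 t (by omega) (by omega))).symm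

lemma singleHorizF {e0 : Fin n} {γ : Fin n → ℕ → Fin n → ℤ} {H : Fin n → ℕ} {j : Fin n}
    (hj : j ≠ e0) :
    ∀ (k : ℕ) (τ : Fin n → ℕ) (v : ℤ), Valid e0 γ H v τ →
      HorizRun e0 γ H j (τ j) (τ j + k) →
      Relation.ReflTransGen (StepR e0 γ H) τ (Function.update τ j (τ j + k)) := by
  intro k
  induction k with
  | zero =>
    intro τ v hv hrun
    have : Function.update τ j (τ j + 0) = τ := by
      rw [show τ j + 0 = τ j from rfl]
      exact Function.update_eq_self _ _
    rw [this]
  | succ k ih =>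
    intro τ v hv hrun
    have hne0j : e0 ≠ j := fun h => hj h.symm
    have hhor : γ j (τ j + 1) e0 = γ j (τ j) e0 :=
      hrun.2.2 (τ j) (by omega) (by omega)
    set τ₁ := Function.update τ j (τ j + 1) with hτ₁
    have hτ₁j : τ₁ j = τ j + 1 := Function.update_self _ _ _
    have hτ₁e0 : τ₁ e0 = τ e0 := Function.update_of_ne hne0j _ _
    have hv₁ : Valid e0 γ H v τ₁ := by
      intro i hi
      by_cases hij : i = j
      · subst hij
        rw [hτ₁j]
        constructor
        · have := hrun.2.1; omega
        · rw [hhor]; exact (hv i hi).2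
      · rw [hτ₁, Function.update_of_ne hij]
        exact hv i hi
    have hstep : StepR e0 γ H τ τ₁ := by
      refine ⟨Or.inl ⟨j, hj, fun i h1 h2 => Function.update_of_ne h2 _ _, hτ₁e0, ?_, ?_⟩,
        ⟨v, hv⟩, ⟨v, hv₁⟩⟩
      · rw [hτ₁j]; simp [Nat.dist]
      · rw [hτ₁j]; exact hhor
    have hrun₁ : HorizRun e0 γ H j (τ₁ j) (τ₁ j + k) := by
      rw [hτ₁j]
      refine ⟨by have := hrun.2.1; omega, by have := hrun.2.1; omega, ?_⟩
      intro t h1 h2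
      exact hrun.2.2 t (by omega) (by omega)
    have := ih τ₁ v hv₁ hrun₁
    rw [hτ₁j] at this
    rw [hτ₁, Function.update_idem] at this
    rw [show τ j + 1 + k = τ j + (k+1) by omega] at this
    exact Relation.ReflTransGen.head hstep this

lemma singleHoriz {e0 : Fin n} {γ : Fin n → ℕ → Fin n → ℤ} {H : Fin n → ℕ} {j : Fin n}
    (hj : j ≠ e0) {τ : Fin n → ℕ} {v : ℤ} {w : ℕ} (hv : Valid e0 γ H v τ)
    (hrun : HorizRun e0 γ H j (τ j) w) :
    Relation.ReflTransGen (StepR e0 γ H) τ (Function.update τ j w) := by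
  rcases le_total (τ j) w with hle | hle
  · have := singleHorizF hj (w - τ j) τ v hv (by
      rw [show τ j + (w - τ j) = w by omega]
      exact hrun)
    rwa [show τ j + (w - τ j) = w by omega] at this
  · set τ₂ := Function.update τ j w with hτ₂
    have hτ₂j : τ₂ j = w := Function.update_self _ _ _
    have hv₂ : Valid e0 γ H v τ₂ := by
      intro i hi
      by_cases hij : i = j
      · subst hij
        rw [hτ₂, Function.update_self]
        exact ⟨hrun.2.1, by rw [horizRun_heights hrun]; exact (hv i hi).2⟩
      · rw [hτ₂, Function.update_of_ne hij]
        exact hv i hi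
    have hrun₂ : HorizRun e0 γ H j (τ₂ j) (τ₂ j + (τ j - w)) := by
      rw [hτ₂j, show w + (τ j - w) = τ j by omega]
      exact ⟨hrun.2.1, hrun.1, fun t h1 h2 => hrun.2.2 t (by omega) (by omega)⟩
    have hres := singleHorizF hj (τ j - w) τ₂ v hv₂ hrun₂
    rw [hτ₂j, show w + (τ j - w) = τ j by omega, hτ₂, Function.update_idem,
      Function.update_eq_self] at hres
    haveI : Std.Symm (StepR e0 γ H) := ⟨fun a b h => stepR_symm h⟩
    exact Std.Symm.symm _ _ hres

lemma multiHoriz {e0 : Fin n} {γ : Fin n → ℕ → Fin n → ℤ} {H : Fin n → ℕ} :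
    ∀ (l : List (Fin n)) (τ τ' : Fin n → ℕ) (v : ℤ), (∀ j ∈ l, j ≠ e0) →
      Valid e0 γ H v τ → Valid e0 γ H v τ' → τ' e0 = τ e0 →
      (∀ i, i ≠ e0 → i ∉ l → τ' i = τ i) →
      (∀ j ∈ l, HorizRun e0 γ H j (τ j) (τ' j)) →
      Relation.ReflTransGen (StepR e0 γ H) τ τ' := by
  intro l
  induction l with
  | nil =>
    intro τ τ' v _ hv hv' he0 hoff _
    have : τ' = τ := by
      funext i
      by_cases hi : i = e0
      · subst hi; exact he0
      · exact hoff i hi (List.not_mem_nil)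
    rw [this]
  | cons j l ih =>
    intro τ τ' v hl hv hv' he0 hoff hruns
    have hjne : j ≠ e0 := hl j (List.mem_cons_self)
    have hne0j : e0 ≠ j := fun h => hjne h.symm
    set τ₁ := Function.update τ j (τ' j) with hτ₁
    have r1 : Relation.ReflTransGen (StepR e0 γ H) τ τ₁ :=
      singleHoriz hjne hv (hruns j (List.mem_cons_self))
    have hv₁ : Valid e0 γ H v τ₁ := by
      intro i hi
      by_cases hij : i = j
      · subst hij
        rw [hτ₁, Function.update_self]
        exact hv' i hi
      · rw [hτ₁, Function.update_of_ne hij]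
        exact hv i hi
    have r2 : Relation.ReflTransGen (StepR e0 γ H) τ₁ τ' := by
      apply ih τ₁ τ' v (fun i hi => hl i (List.mem_cons_of_mem j hi)) hv₁ hv'
      · rw [hτ₁, Function.update_of_ne hne0j]
        exact he0
      · intro i hi hil
        by_cases hij : i = j
        · subst hij
          rw [hτ₁, Function.update_self]
        · rw [hτ₁, Function.update_of_ne hij]
          exact hoff i hi (by
            intro hmem
            rcases List.mem_cons.mp hmem with h | h
            · exact hij h
            · exact hil h)
      · intro i hi
        by_cases hij : i = j
        · subst hij
          rw [hτ₁, Function.update_self]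
          exact horizRun_refl (hv' i (hl i (List.mem_cons_self))).1
        · rw [hτ₁, Function.update_of_ne hij]
          exact hruns i (List.mem_cons_of_mem j hi)
    exact r1.trans r2

lemma exists_third (hn : 3 ≤ n) (a b : Fin n) : ∃ c : Fin n, c ≠ a ∧ c ≠ b := by
  by_contra hc
  push_neg at hc
  have hsub : (Finset.univ : Finset (Fin n)) ⊆ {a, b} := by
    intro c _
    rcases Classical.em (c = a) with h | h
    · simp [h]
    · simp [hc c h]
  have h1 := Finset.card_le_card hsub
  have h2 : ({a, b} : Finset (Fin n)).card ≤ 2 :=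
    le_trans (Finset.card_insert_le _ _) (by simp)
  rw [Finset.card_univ, Fintype.card_fin] at h1
  omega

def Lam (e0 pick : Fin n) (γ : Fin n → ℕ → Fin n → ℤ) (τ : Fin n → ℕ) : Fin n → ℤ :=
  fun i => if i = e0 then γ pick (τ pick) e0 else γ i (τ i) i

section Steps
variable {e0 : Fin n} {γ : Fin n → ℕ → Fin n → ℤ} {H : Fin n → ℕ}

lemma stepPair {j : Fin n} (hj : j ≠ e0)
    (hbox3 : ∀ t ≤ H j, ∀ i, i ≠ e0 → i ≠ j → γ j t i = 0)
    (hadjj : ∀ t < H j, latAdj (γ j t) (γ j (t+1)))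
    {u u' : ℕ} (hu : u ≤ H j) (hu' : u' ≤ H j) (hd : Nat.dist u u' = 1) :
    (γ j u' e0 = γ j u e0 ∧ |γ j u' j - γ j u j| = 1) ∨
    (γ j u' j = γ j u j ∧ |γ j u' e0 - γ j u e0| = 1) := by
  have hne : e0 ≠ j := fun h => hj h.symm
  have main : ∀ t < H j, (γ j (t+1) e0 = γ j t e0 ∧ |γ j (t+1) j - γ j t j| = 1) ∨
      (γ j (t+1) j = γ j t j ∧ |γ j (t+1) e0 - γ j t e0| = 1) := by
    intro t ht
    have hsum := hadjj t ht
    unfold latAdj at hsum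
    have hz : ∀ i ∈ (Finset.univ : Finset (Fin n)), i ∉ ({e0, j} : Finset (Fin n)) →
        |γ j t i - γ j (t+1) i| = 0 := by
      intro i _ hi
      simp only [Finset.mem_insert, Finset.mem_singleton] at hi
      push_neg at hi
      rw [hbox3 t (by omega) i hi.1 hi.2, hbox3 (t+1) (by omega) i hi.1 hi.2]
      simp
    have hred : ∑ i ∈ ({e0, j} : Finset (Fin n)), |γ j t i - γ j (t+1) i| =
        ∑ i, |γ j t i - γ j (t+1) i| :=
      Finset.sum_subset (Finset.subset_univ _) (fun i h1 h2 => hz i h1 h2)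
    rw [Finset.sum_pair hne] at hred
    rw [hsum] at hred
    set d0 := γ j t e0 - γ j (t+1) e0 with hd0
    set dj := γ j t j - γ j (t+1) j with hdj
    have habs0 := abs_choice d0
    have habsj := abs_choice dj
    have habs0' := abs_nonneg d0
    have habsj' := abs_nonneg dj
    rcases (by omega : (d0 = 0 ∧ (dj = 1 ∨ dj = -1)) ∨ (dj = 0 ∧ (d0 = 1 ∨ d0 = -1)))
      with ⟨h1, h2⟩ | ⟨h1, h2⟩
    · left
      constructor
      · omega
      · rcases h2 with h2 | h2 <;> rw [show γ j (t+1) j - γ j t j = -dj by omega] <;>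
          rw [h2] <;> simp
    · right
      constructor
      · omega
      · rcases h2 with h2 | h2 <;> rw [show γ j (t+1) e0 - γ j t e0 = -d0 by omega] <;>
          rw [h2] <;> simp
  rcases natdist_iff.mp hd with h | h
  · rw [h]
    exact main u (by omega)
  · rcases main u' (by omega) with ⟨h1, h2⟩ | ⟨h1, h2⟩
    · left
      rw [← h] at h1 h2
      exact ⟨h1.symm, by rwa [abs_sub_comm] at h2⟩
    · right
      rw [← h] at h1 h2
      exact ⟨h1.symm, by rwa [abs_sub_comm] at h2⟩

lemma step_latAdj (hn : 3 ≤ n) {pick : Fin n} (hpick : pick ≠ e0)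
    (hbox3 : ∀ j, j ≠ e0 → ∀ t ≤ H j, ∀ i, i ≠ e0 → i ≠ j → γ j t i = 0)
    (hadjA : ∀ j, j ≠ e0 → ∀ t < H j, latAdj (γ j t) (γ j (t+1)))
    {τ τ' : Fin n → ℕ} (h : StepR e0 γ H τ τ') :
    latAdj (Lam e0 pick γ τ) (Lam e0 pick γ τ') := by
  obtain ⟨hmo, ⟨v, hv⟩, ⟨v', hv'⟩⟩ := h
  unfold latAdj
  rcases hmo with ⟨j, hj, hoth, he0eq, hdist, hheq⟩ | ⟨hall, j1, hj1, hch⟩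
  · -- solo horizontal move of walker j
    obtain ⟨i0, hi0a, hi0b⟩ := exists_third hn e0 j
    have hvv' : v' = v := by
      rw [← (hv' i0 hi0a).2, hoth i0 hi0a hi0b, (hv i0 hi0a).2]
    rw [Finset.sum_eq_single_of_mem j (Finset.mem_univ j)]
    · show |Lam e0 pick γ τ j - Lam e0 pick γ τ' j| = 1
      unfold Lam
      rw [if_neg hj, if_neg hj]
      rcases stepPair hj (hbox3 j hj) (hadjA j hj) (hv j hj).1 (hv' j hj).1 hdist with
        ⟨h1, h2⟩ | ⟨h1, h2⟩
      · rwa [abs_sub_comm] at h2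
      · exfalso
        rw [hheq] at h2
        simp at h2
    · intro i _ hij
      show |Lam e0 pick γ τ i - Lam e0 pick γ τ' i| = 0
      unfold Lam
      by_cases hie : i = e0
      · rw [if_pos hie, if_pos hie]
        rw [(hv pick hpick).2, (hv' pick hpick).2, hvv']
        simp
      · rw [if_neg hie, if_neg hie, hoth i hie hij]
        simp
  · -- simultaneous vertical move
    have hvne : v' ≠ v := by
      rw [← (hv j1 hj1).2, ← (hv' j1 hj1).2]
      exact hch
    have hvert : ∀ j, j ≠ e0 → γ j (τ' j) j = γ j (τ j) j ∧ |γ j (τ' j) e0 - γ j (τ j) e0| = 1 := by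
      intro j hj
      rcases stepPair hj (hbox3 j hj) (hadjA j hj) (hv j hj).1 (hv' j hj).1 (hall j hj) with
        ⟨h1, h2⟩ | hgood
      · exfalso
        apply hvne
        rw [← (hv' j hj).2, ← (hv j hj).2, h1]
      · exact hgood
    rw [Finset.sum_eq_single_of_mem e0 (Finset.mem_univ e0)]
    · show |Lam e0 pick γ τ e0 - Lam e0 pick γ τ' e0| = 1
      unfold Lam
      rw [if_pos rfl, if_pos rfl]
      have hthis := (hvert pick hpick).2
      rw [(hv pick hpick).2, (hv' pick hpick).2] at hthis
      rw [(hv pick hpick).2, (hv' pick hpick).2, abs_sub_comm]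
      exact hthis
    · intro i _ hie
      show |Lam e0 pick γ τ i - Lam e0 pick γ τ' i| = 0
      unfold Lam
      rw [if_neg hie, if_neg hie, (hvert i hie).1]
      simp

lemma proj_Lam {pick : Fin n} (hpick : pick ≠ e0) {j : Fin n} (hj : j ≠ e0)
    (hbox3 : ∀ t ≤ H j, ∀ i, i ≠ e0 → i ≠ j → γ j t i = 0)
    {τ : Fin n → ℕ} {v : ℤ} (hv : Valid e0 γ H v τ) :
    proj {e0, j} (Lam e0 pick γ τ) = γ j (τ j) := by
  funext i
  show (if i ∈ ({e0, j} : Finset (Fin n)) then Lam e0 pick γ τ i else 0) = γ j (τ j) i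
  by_cases hie : i = e0
  · rw [hie, if_pos (by simp), show Lam e0 pick γ τ e0 = γ pick (τ pick) e0 from if_pos rfl]
    rw [(hv pick hpick).2, (hv j hj).2]
  · by_cases hij : i = j
    · rw [hij, if_pos (by simp), show Lam e0 pick γ τ j = γ j (τ j) j from if_neg hj]
    · rw [if_neg (by simp [hie, hij]), hbox3 (τ j) (hv j hj).1 i hie hij]

end Steps


set_option maxHeartbeats 1000000 in
lemma assembly {n : ℕ} (hn : 3 ≤ n) (e0 : Fin n) (he0 : (e0 : ℕ) = 0)
    (N : ℕ) (m : Fin n → ℕ) (hm : m e0 = N)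
    (ω : Fin n → (Fin n → ℤ) → Bool)
    (H : Fin n → ℕ) (γ : Fin n → ℕ → Fin n → ℤ)
    (hbox : ∀ j, j ≠ e0 → ∀ t ≤ H j,
      (0 ≤ γ j t e0 ∧ γ j t e0 ≤ (N : ℤ)) ∧ (0 ≤ γ j t j ∧ γ j t j ≤ (m j : ℤ)) ∧
        ∀ i, i ≠ e0 → i ≠ j → γ j t i = 0)
    (hopen : ∀ j, j ≠ e0 → ∀ t ≤ H j, ω j (γ j t) = true)
    (hadj : ∀ j, j ≠ e0 → ∀ t < H j, latAdj (γ j t) (γ j (t + 1)))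
    (hend : ∀ j, j ≠ e0 → γ j (H j) e0 = (N : ℤ))
    (K : Fin n → ℕ) (P : Fin n → ℕ → ℕ) (S : ℕ) (σ : Fin n → ℕ → ℕ) (hgt : ℕ → ℤ)
    (hhS : hgt S = N) (hhstep : ∀ s < S, |hgt (s+1) - hgt s| = 1)
    (hσ0 : ∀ j, j ≠ e0 → σ j 0 = 0) (hσS : ∀ j, j ≠ e0 → σ j S = K j)
    (hσbd : ∀ j, j ≠ e0 → ∀ s ≤ S, σ j s ≤ K j)
    (hhgt : ∀ j, j ≠ e0 → ∀ s ≤ S, γ j (P j (σ j s)) e0 = hgt s)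
    (hσstep : ∀ j, j ≠ e0 → ∀ s < S, Nat.dist (σ j s) (σ j (s+1)) = 1)
    (hP0 : ∀ j, j ≠ e0 → P j 0 = 0)
    (hPbd : ∀ j, j ≠ e0 → ∀ i ≤ K j, P j i ≤ H j)
    (hrun : ∀ j, j ≠ e0 → ∀ i < K j, 1 ≤ P j (i+1) ∧ P j i ≤ P j (i+1) - 1 ∧
        ∀ t, P j i ≤ t → t < P j (i+1) - 1 → γ j (t+1) e0 = γ j t e0)
    (hendrun : ∀ j, j ≠ e0 → ∀ t, P j (K j) ≤ t → t < H j → γ j (t+1) e0 = γ j t e0) :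
    ∃ (T : ℕ) (lam : ℕ → Fin n → ℤ),
      (∀ t ≤ T, (∀ i, 0 ≤ lam t i ∧ lam t i ≤ (m i : ℤ)) ∧
        ∀ j, j ≠ e0 → ω j (proj {e0, j} (lam t)) = true) ∧
      (∀ t < T, latAdj (lam t) (lam (t + 1))) ∧
      ∀ j, j ≠ e0 → proj {e0, j} (lam 0) = γ j 0 ∧ proj {e0, j} (lam T) = γ j (H j) := by
  classical
  have hbox3 : ∀ j, j ≠ e0 → ∀ t ≤ H j, ∀ i, i ≠ e0 → i ≠ j → γ j t i = 0 :=
    fun j hj t ht i h1 h2 => (hbox j hj t ht).2.2 i h1 h2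
  -- pick a reference walker
  have hn0 : 0 < n := by omega
  set pick : Fin n := ⟨1, by omega⟩ with hpickdef
  have hpick : pick ≠ e0 := by
    intro hc
    have := congrArg Fin.val hc
    rw [he0] at this
    simp [hpickdef] at this
  -- the list of all walkers
  set l : List (Fin n) := (Finset.univ.filter (fun j => j ≠ e0)).toList with hldef
  have hml : ∀ j : Fin n, j ∈ l ↔ j ≠ e0 := by
    intro j
    rw [hldef, Finset.mem_toList]
    simp
  -- states
  set st : ℕ → Fin n → ℕ := fun s i => if i = e0 then 0 else P i (σ i s) with hstdef
  set pre : ℕ → Fin n → ℕ := fun s i => if i = e0 then 0 else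
    if σ i (s+1) = σ i s + 1 then P i (σ i s + 1) - 1 else P i (σ i s) with hpredef
  set post : ℕ → Fin n → ℕ := fun s i => if i = e0 then 0 else
    if σ i (s+1) = σ i s + 1 then P i (σ i s + 1) else P i (σ i s) - 1 with hpostdef
  set fin : Fin n → ℕ := fun i => if i = e0 then 0 else H i with hfindef
  -- validity of resting states
  have vst : ∀ s, s ≤ S → Valid e0 γ H (hgt s) (st s) := by
    intro s hs j hj
    rw [hstdef]
    simp only [if_neg hj]
    exact ⟨hPbd j hj _ (hσbd j hj s hs), hhgt j hj s hs⟩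
  -- validity of pre states
  have vpre : ∀ s, s < S → Valid e0 γ H (hgt s) (pre s) := by
    intro s hs j hj
    rw [hpredef]
    simp only [if_neg hj]
    by_cases hf : σ j (s+1) = σ j s + 1
    · rw [if_pos hf]
      have hiK : σ j s < K j := by
        have h1 := hσbd j hj (s+1) (by omega)
        omega
      obtain ⟨e1, e2, e3⟩ := hrun j hj (σ j s) hiK
      have hb1 : P j (σ j s + 1) ≤ H j := by
        apply hPbd j hj
        omega
      constructor
      · omega
      · have heq : γ j (P j (σ j s + 1) - 1) e0 = γ j (P j (σ j s)) e0 :=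
          eq_of_steps (f := fun t => γ j t e0) e2 (fun t h1 h2 => e3 t h1 h2)
        rw [heq]
        exact hhgt j hj s (by omega)
    · rw [if_neg hf]
      exact ⟨hPbd j hj _ (hσbd j hj s (by omega)), hhgt j hj s (by omega)⟩
  -- validity of post states
  have vpost : ∀ s, s < S → Valid e0 γ H (hgt (s+1)) (post s) := by
    intro s hs j hj
    rw [hpostdef]
    simp only [if_neg hj]
    have hdir := natdist_iff.mp (hσstep j hj s hs)
    by_cases hf : σ j (s+1) = σ j s + 1
    · rw [if_pos hf]
      rw [← hf]
      exact ⟨hPbd j hj _ (hσbd j hj (s+1) (by omega)), hhgt j hj (s+1) (by omega)⟩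
    · rw [if_neg hf]
      have hb : σ j s = σ j (s+1) + 1 := hdir.resolve_left hf
      have hiK : σ j (s+1) < K j := by
        have h1 := hσbd j hj s (by omega)
        omega
      obtain ⟨e1, e2, e3⟩ := hrun j hj (σ j (s+1)) hiK
      rw [hb]
      constructor
      · have := hPbd j hj (σ j (s+1) + 1) (by omega)
        omega
      · have heq : γ j (P j (σ j (s+1) + 1) - 1) e0 = γ j (P j (σ j (s+1))) e0 :=
          eq_of_steps (f := fun t => γ j t e0) e2 (fun t h1 h2 => e3 t h1 h2)
        rw [heq]
        exact hhgt j hj (s+1) (by omega)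
  -- phase 1 : resting -> pre
  have R1 : ∀ s, s < S → Relation.ReflTransGen (StepR e0 γ H) (st s) (pre s) := by
    intro s hs
    apply multiHoriz l (st s) (pre s) (hgt s) (fun j hj => (hml j).mp hj)
      (vst s (by omega)) (vpre s hs)
    · rw [hstdef, hpredef]; simp
    · intro i hi hil
      exact absurd ((hml i).mpr hi) hil
    · intro j hjl
      have hj : j ≠ e0 := (hml j).mp hjl
      rw [hstdef, hpredef]
      simp only [if_neg hj]
      by_cases hf : σ j (s+1) = σ j s + 1
      · rw [if_pos hf]
        have hiK : σ j s < K j := by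
          have h1 := hσbd j hj (s+1) (by omega)
          omega
        obtain ⟨e1, e2, e3⟩ := hrun j hj (σ j s) hiK
        have hb1 : P j (σ j s + 1) ≤ H j := hPbd j hj _ (by omega)
        refine ⟨hPbd j hj _ (hσbd j hj s (by omega)), by omega, ?_⟩
        intro t h1 h2
        exact e3 t (by omega) (by omega)
      · rw [if_neg hf]
        exact horizRun_refl (hPbd j hj _ (hσbd j hj s (by omega)))
  -- phase 2 : pre -> post (the vertical step)
  have R2 : ∀ s, s < S → Relation.ReflTransGen (StepR e0 γ H) (pre s) (post s) := by
    intro s hs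
    apply Relation.ReflTransGen.single
    refine ⟨Or.inr ⟨?_, pick, hpick, ?_⟩, ⟨hgt s, vpre s hs⟩, ⟨hgt (s+1), vpost s hs⟩⟩
    · intro j hj
      rw [hpredef, hpostdef]
      simp only [if_neg hj]
      have hdir := natdist_iff.mp (hσstep j hj s hs)
      by_cases hf : σ j (s+1) = σ j s + 1
      · rw [if_pos hf, if_pos hf]
        have hiK : σ j s < K j := by
          have h1 := hσbd j hj (s+1) (by omega)
          omega
        obtain ⟨e1, -, -⟩ := hrun j hj (σ j s) hiK
        rw [natdist_iff]
        omega
      · rw [if_neg hf, if_neg hf]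
        have hb : σ j s = σ j (s+1) + 1 := hdir.resolve_left hf
        have hiK : σ j (s+1) < K j := by
          have h1 := hσbd j hj s (by omega)
          omega
        obtain ⟨e1, -, -⟩ := hrun j hj (σ j (s+1)) hiK
        rw [hb]
        rw [natdist_iff]
        omega
    · rw [(vpost s hs pick hpick).2, (vpre s hs pick hpick).2]
      have := hhstep s hs
      intro hc
      rw [hc] at this
      simp at this
  -- phase 3 : post -> next resting state
  have R3 : ∀ s, s < S → Relation.ReflTransGen (StepR e0 γ H) (post s) (st (s+1)) := by
    intro s hs
    apply multiHoriz l (post s) (st (s+1)) (hgt (s+1)) (fun j hj => (hml j).mp hj)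
      (vpost s hs) (vst (s+1) (by omega))
    · rw [hstdef, hpostdef]; simp
    · intro i hi hil
      exact absurd ((hml i).mpr hi) hil
    · intro j hjl
      have hj : j ≠ e0 := (hml j).mp hjl
      rw [hstdef, hpostdef]
      simp only [if_neg hj]
      have hdir := natdist_iff.mp (hσstep j hj s hs)
      by_cases hf : σ j (s+1) = σ j s + 1
      · rw [if_pos hf, ← hf]
        exact horizRun_refl (hPbd j hj _ (hσbd j hj (s+1) (by omega)))
      · rw [if_neg hf]
        have hb : σ j s = σ j (s+1) + 1 := hdir.resolve_left hf
        have hiK : σ j (s+1) < K j := by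
          have h1 := hσbd j hj s (by omega)
          omega
        obtain ⟨e1, e2, e3⟩ := hrun j hj (σ j (s+1)) hiK
        have hb1 : P j (σ j (s+1) + 1) ≤ H j := hPbd j hj _ (by omega)
        rw [hb]
        refine ⟨by omega, hPbd j hj _ (by omega), ?_⟩
        intro t h1 h2
        exact e3 t (by omega) (by omega)
  -- the main induction along synchronized time
  have Rmain : ∀ s, s ≤ S → Relation.ReflTransGen (StepR e0 γ H) (st 0) (st s) := by
    intro s
    induction s with
    | zero => intro _; exact Relation.ReflTransGen.refl
    | succ s ih =>
      intro hs
      exact (ih (by omega)).trans (((R1 s (by omega)).trans (R2 s (by omega))).trans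
        (R3 s (by omega)))
  -- final horizontal runs to the end of each γ j
  have vfin : Valid e0 γ H (N : ℤ) fin := by
    intro j hj
    rw [hfindef]
    simp only [if_neg hj]
    exact ⟨le_rfl, hend j hj⟩
  have Rend : Relation.ReflTransGen (StepR e0 γ H) (st S) fin := by
    apply multiHoriz l (st S) fin ((N : ℤ)) (fun j hj => (hml j).mp hj)
      (by rw [← hhS]; exact vst S le_rfl) vfin
    · rw [hstdef, hfindef]; simp
    · intro i hi hil
      exact absurd ((hml i).mpr hi) hil
    · intro j hjl
      have hj : j ≠ e0 := (hml j).mp hjl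
      rw [hstdef, hfindef]
      simp only [if_neg hj]
      refine ⟨hPbd j hj _ (hσbd j hj S le_rfl), le_rfl, ?_⟩
      intro t h1 h2
      have hPK : P j (σ j S) ≤ H j := hPbd j hj _ (hσbd j hj S le_rfl)
      apply hendrun j hj t _ (by omega)
      rw [← hσS j hj]
      omega
  have Rtot : Relation.ReflTransGen (StepR e0 γ H) (st 0) fin :=
    (Rmain S le_rfl).trans Rend
  obtain ⟨T, f, f0, fT, fstep⟩ := rtg_to_seq' Rtot
  have vAll : ∀ t ≤ T, ∃ v, Valid e0 γ H v (f t) := by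
    intro t ht
    cases t with
    | zero =>
      rw [f0]
      exact ⟨hgt 0, vst 0 (by omega)⟩
    | succ t => exact (fstep t (by omega)).2.2
  refine ⟨T, fun t => Lam e0 pick γ (f t), ?_, ?_, ?_⟩
  · intro t ht
    obtain ⟨v, hv⟩ := vAll t ht
    constructor
    · intro i
      show 0 ≤ Lam e0 pick γ (f t) i ∧ Lam e0 pick γ (f t) i ≤ (m i : ℤ)
      by_cases hie : i = e0
      · rw [hie]
        have hLam : Lam e0 pick γ (f t) e0 = γ pick (f t pick) e0 := if_pos rfl
        rw [hLam, hm]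
        exact (hbox pick hpick (f t pick) (hv pick hpick).1).1
      · have hLam : Lam e0 pick γ (f t) i = γ i (f t i) i := if_neg hie
        rw [hLam]
        exact (hbox i hie (f t i) (hv i hie).1).2.1
    · intro j hj
      show ω j (proj {e0, j} (Lam e0 pick γ (f t))) = true
      rw [proj_Lam hpick hj (hbox3 j hj) hv]
      exact hopen j hj _ (hv j hj).1
  · intro t ht
    show latAdj (Lam e0 pick γ (f t)) (Lam e0 pick γ (f (t+1)))
    exact step_latAdj hn hpick hbox3 hadj (fstep t ht)
  · intro j hj
    constructor
    · obtain ⟨v, hv⟩ := vAll 0 (by omega)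
      show proj {e0, j} (Lam e0 pick γ (f 0)) = γ j 0
      rw [proj_Lam hpick hj (hbox3 j hj) hv, f0, hstdef]
      simp only [if_neg hj, hσ0 j hj, hP0 j hj]
    · obtain ⟨v, hv⟩ := vAll T le_rfl
      show proj {e0, j} (Lam e0 pick γ (f T)) = γ j (H j)
      rw [proj_Lam hpick hj (hbox3 j hj) hv, fT, hfindef]
      simp only [if_neg hj]




/-- path lifting, k = 2: given, for each `j ≠ 1`, a bottom-to-top open
crossing `γ_j` of the projected rectangle `π_{I_j}(B)` (staying strictly below height `N`
before its final time), there is a nearest-neighbor path `λ` inside `B`, simultaneously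
`ω_{I_j}`-open for all `j`, whose `I_j`-projections start at `γ_j 0` and end at
`γ_j (H j)`. -/
theorem path_lifting (n : ℕ) (hn : 3 ≤ n) (e0 : Fin n) (he0 : (e0 : ℕ) = 0)
    (N : ℕ) (m : Fin n → ℕ) (hm : m e0 = N)
    (ω : Fin n → (Fin n → ℤ) → Bool)
    (H : Fin n → ℕ) (γ : Fin n → ℕ → Fin n → ℤ)
    (hbox : ∀ j, j ≠ e0 → ∀ t ≤ H j,
      (0 ≤ γ j t e0 ∧ γ j t e0 ≤ (N : ℤ)) ∧ (0 ≤ γ j t j ∧ γ j t j ≤ (m j : ℤ)) ∧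
        ∀ i, i ≠ e0 → i ≠ j → γ j t i = 0)
    (hopen : ∀ j, j ≠ e0 → ∀ t ≤ H j, ω j (γ j t) = true)
    (hadj : ∀ j, j ≠ e0 → ∀ t < H j, latAdj (γ j t) (γ j (t + 1)))
    (hstart : ∀ j, j ≠ e0 → γ j 0 e0 = 0)
    (hend : ∀ j, j ≠ e0 → γ j (H j) e0 = (N : ℤ))
    (hbelow : ∀ j, j ≠ e0 → ∀ t < H j, γ j t e0 < (N : ℤ)) :
    ∃ (T : ℕ) (lam : ℕ → Fin n → ℤ),
      (∀ t ≤ T, (∀ i, 0 ≤ lam t i ∧ lam t i ≤ (m i : ℤ)) ∧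
        ∀ j, j ≠ e0 → ω j (proj {e0, j} (lam t)) = true) ∧
      (∀ t < T, latAdj (lam t) (lam (t + 1))) ∧
      ∀ j, j ≠ e0 → proj {e0, j} (lam 0) = γ j 0 ∧ proj {e0, j} (lam T) = γ j (H j) := by
  classical
  have hn0 : 0 < n := by omega
  -- step size bound for the height process of each walker
  have hstep_le : ∀ j, j ≠ e0 → ∀ t < H j, |γ j (t+1) e0 - γ j t e0| ≤ 1 := by
    intro j hj t ht
    have hs := hadj j hj t ht
    unfold latAdj at hs
    have hle : |γ j t e0 - γ j (t+1) e0| ≤ ∑ i, |γ j t i - γ j (t+1) i| :=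
      Finset.single_le_sum (f := fun i => |γ j t i - γ j (t+1) i|)
        (fun i _ => abs_nonneg _) (Finset.mem_univ e0)
    rw [hs] at hle
    rwa [abs_sub_comm] at hle
  -- skeleton data
  set G : Fin n → ℕ → ℤ := fun j t => γ j t e0 with hGdef
  set K : Fin n → ℕ := fun j => cnt (G j) (H j) with hKdef
  set P : Fin n → ℕ → ℕ := fun j i => pf (G j) (H j) i with hPdef
  set A : Fin n → ℕ → ℤ := fun j i => G j (P j i) with hAdef
  have hPbd : ∀ j, j ≠ e0 → ∀ i ≤ K j, P j i ≤ H j := by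
    intro j hj i hi
    exact (pf_spec (G j) hi).2
  have hPcnt : ∀ j, j ≠ e0 → ∀ i ≤ K j, cnt (G j) (P j i) = i := by
    intro j hj i hi
    exact (pf_spec (G j) hi).1
  have hA0 : ∀ j, j ≠ e0 → A j 0 = 0 := by
    intro j hj
    rw [hAdef]
    simp only [hPdef, pf_zero]
    exact hstart j hj
  have hAK : ∀ j, j ≠ e0 → A j (K j) = (N : ℤ) := by
    intro j hj
    have h1 : G j (H j) = G j (P j (K j)) := by
      apply run_const (G j) (hPbd j hj (K j) le_rfl)
      rw [hPcnt j hj (K j) le_rfl]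
    rw [hAdef]
    show G j (P j (K j)) = (N : ℤ)
    rw [← h1]
    exact hend j hj
  have hApos : ∀ j, j ≠ e0 → ∀ i ≤ K j, 0 ≤ A j i := by
    intro j hj i hi
    exact (hbox j hj (P j i) (hPbd j hj i hi)).1.1
  have hPltH : ∀ j, j ≠ e0 → ∀ i < K j, P j i < H j := by
    intro j hj i hi
    have h1 := hPbd j hj i (by omega)
    have h2 := hPcnt j hj i (by omega)
    rcases Nat.lt_or_ge (P j i) (H j) with h | h
    · exact h
    · exfalso
      have : P j i = H j := by omega
      rw [this] at h2
      simp only [hKdef] at hi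
      omega
  have hAlt : ∀ j, j ≠ e0 → ∀ i < K j, A j i < (N : ℤ) := by
    intro j hj i hi
    exact hbelow j hj (P j i) (hPltH j hj i hi)
  have hrunfacts : ∀ j, j ≠ e0 → ∀ i < K j, 1 ≤ P j (i+1) ∧ P j i ≤ P j (i+1) - 1 ∧
      (∀ t, P j i ≤ t → t < P j (i+1) - 1 → γ j (t+1) e0 = γ j t e0) ∧
      cnt (G j) (P j (i+1) - 1) = i ∧ G j (P j (i+1)) ≠ G j (P j (i+1) - 1) := by
    intro j hj i hi
    obtain ⟨e1, e2, e3, e4⟩ := pf_succ (G j) (E := H j) (i := i) (by simp only [hKdef] at hi; omega)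
    refine ⟨e1, e4, ?_, e2, e3⟩
    intro t h1 h2
    exact run_horiz (G j) e4 (by rw [hPcnt j hj i (by omega), e2]) t h1 h2
  have hAstep : ∀ j, j ≠ e0 → ∀ i < K j, |A j (i+1) - A j i| = 1 := by
    intro j hj i hi
    obtain ⟨e1, e2, e3, e4, e5⟩ := hrunfacts j hj i hi
    have hAi : A j i = G j (P j (i+1) - 1) := by
      rw [hAdef]
      show G j (P j i) = G j (P j (i+1) - 1)
      exact (run_const (G j) e2 (by rw [hPcnt j hj i (by omega), e4])).symm
    have hband : |G j (P j (i+1)) - G j (P j (i+1) - 1)| ≤ 1 := by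
      have hPH : P j (i+1) ≤ H j := hPbd j hj (i+1) (by omega)
      have := hstep_le j hj (P j (i+1) - 1) (by omega)
      rwa [show P j (i+1) - 1 + 1 = P j (i+1) by omega] at this
    have hne : G j (P j (i+1)) - G j (P j (i+1) - 1) ≠ 0 := by
      intro hc
      exact e5 (by omega)
    rw [hAdef]
    show |G j (P j (i+1)) - G j (P j i)| = 1
    rw [hAdef] at hAi
    rw [show G j (P j i) = G j (P j (i+1) - 1) from hAi]
    have := abs_choice (G j (P j (i+1)) - G j (P j (i+1) - 1))
    have := abs_nonneg (G j (P j (i+1)) - G j (P j (i+1) - 1))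
    omega
  -- the list of walkers
  set pick : Fin n := ⟨1, by omega⟩ with hpickdef
  have hpick : pick ≠ e0 := by
    intro hc
    have := congrArg Fin.val hc
    rw [he0] at this
    simp [hpickdef] at this
  set l : List (Fin n) := (Finset.univ.filter (fun j => j ≠ e0)).toList with hldef
  have hml : ∀ j : Fin n, j ∈ l ↔ j ≠ e0 := by
    intro j
    rw [hldef, Finset.mem_toList]
    simp
  have hlne : l ≠ [] := List.ne_nil_of_mem ((hml pick).mpr hpick)
  -- synchronize all skeleton walks
  obtain ⟨S, σ, hgt, hh0, hhS, hhstep, hhpos, hhlt, hσl⟩ :=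
    multiSync (N : ℤ) K A l hlne
      (fun j hjl => hA0 j ((hml j).mp hjl))
      (fun j hjl => hAK j ((hml j).mp hjl))
      (fun j hjl => hAstep j ((hml j).mp hjl))
      (fun j hjl => hApos j ((hml j).mp hjl))
      (fun j hjl => hAlt j ((hml j).mp hjl))
  have hσ : ∀ j, j ≠ e0 → σ j 0 = 0 ∧ σ j S = K j ∧
      (∀ s ≤ S, σ j s ≤ K j ∧ A j (σ j s) = hgt s) ∧
      (∀ s < S, Nat.dist (σ j s) (σ j (s+1)) = 1) :=
    fun j hj => hσl j ((hml j).mpr hj)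
  -- apply the assembly lemma
  apply assembly hn e0 he0 N m hm ω H γ hbox hopen hadj hend K P S σ hgt hhS hhstep
  · exact fun j hj => (hσ j hj).1
  · exact fun j hj => (hσ j hj).2.1
  · exact fun j hj s hs => ((hσ j hj).2.2.1 s hs).1
  · exact fun j hj s hs => ((hσ j hj).2.2.1 s hs).2
  · exact fun j hj s hs => (hσ j hj).2.2.2 s hs
  · intro j hj
    rw [hPdef]
    exact pf_zero (G j) (H j)
  · exact hPbd
  · exact fun j hj i hi => ⟨(hrunfacts j hj i hi).1, (hrunfacts j hj i hi).2.1,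
      (hrunfacts j hj i hi).2.2.1⟩
  · intro j hj t h1 h2
    apply run_horiz (G j) (u := P j (K j)) (v := H j) (hPbd j hj (K j) le_rfl)
      (by rw [hPcnt j hj (K j) le_rfl]) t h1 h2


end BernoulliHyperplane
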